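/- Let n ≠ m be positive integers and let γ be a real number with γ² = γ*_{n,m}. Then either λ*_{n,+}(γ) = λ*_{m,+}(γ) or λ*_{n,−}(γ) = λ*_{m,−}(γ); i.e. the same-sign bifurcation values for the modes n and m coincide. -/

import Mathlib

/-- `T h n = tanh (n h) / n`. -/
noncomputable def T (h : ℝ) (n : ℕ) : ℝ := Real.tanh (n * h) / n

/-- `λ*_{n,+}(γ)`. -/
noncomputable def lamPlus (h g E22 γ : ℝ) (n : ℕ) : ℝ :=
  γ / 2 * T h n + Real.sqrt (γ ^ 2 * (T h n) ^ 2 / 4 + (g + n ^ 4 * E22 / 2) * T h n)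

/-- `λ*_{n,−}(γ)`. -/
noncomputable def lamMinus (h g E22 γ : ℝ) (n : ℕ) : ℝ :=
  γ / 2 * T h n - Real.sqrt (γ ^ 2 * (T h n) ^ 2 / 4 + (g + n ^ 4 * E22 / 2) * T h n)

/-- The critical vorticity value `γ*_{n,m}`. -/
noncomputable def gammaStar (h g E22 : ℝ) (n m : ℕ) : ℝ :=
  ((2 * g + n ^ 4 * E22) * T h n - (2 * g + m ^ 4 * E22) * T h m) ^ 2 /
    (2 * T h n * T h m * (T h n - T h m) * ((m : ℝ) ^ 4 - (n : ℝ) ^ 4) * E22)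

lemma tanh_div_strictAnti {x y : ℝ} (hx : 0 < x) (hxy : x < y) :
    Real.tanh y / y < Real.tanh x / x := by
  have key : StrictAntiOn (fun t => Real.sinh t / (Real.cosh t * t)) (Set.Icc x y) := by
    apply strictAntiOn_of_deriv_neg (convex_Icc x y)
    · apply ContinuousOn.div Real.continuous_sinh.continuousOn
        (Real.continuous_cosh.continuousOn.mul continuousOn_id)
      intro t ht
      have ht0 : 0 < t := lt_of_lt_of_le hx ht.1
      have := Real.cosh_pos t
      exact mul_ne_zero this.ne' ht0.ne'
    · intro t ht
      rw [interior_Icc] at ht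
      have ht0 : 0 < t := hx.trans ht.1
      have hc := Real.cosh_pos t
      have hd : HasDerivAt (fun t => Real.sinh t / (Real.cosh t * t))
          ((Real.cosh t * (Real.cosh t * t) -
            Real.sinh t * (Real.sinh t * t + Real.cosh t * 1)) / (Real.cosh t * t) ^ 2) t :=
        (Real.hasDerivAt_sinh t).div ((Real.hasDerivAt_cosh t).mul (hasDerivAt_id t))
          (by positivity)
      rw [hd.deriv]
      apply div_neg_of_neg_of_pos
      · have h1 : t < Real.sinh t := Real.self_lt_sinh_iff.mpr ht0
        have h2 : (1:ℝ) ≤ Real.cosh t := Real.one_le_cosh t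
        have h3 : Real.cosh t ^ 2 - Real.sinh t ^ 2 = 1 := Real.cosh_sq_sub_sinh_sq t
        nlinarith [mul_nonneg (le_of_lt (ht0.trans h1)) (sub_nonneg.mpr h2)]
      · positivity
  have hmem1 : x ∈ Set.Icc x y := ⟨le_refl x, hxy.le⟩
  have hmem2 : y ∈ Set.Icc x y := ⟨hxy.le, le_refl y⟩
  have := key hmem1 hmem2 hxy
  simp only [Real.tanh_eq_sinh_div_cosh, div_div]
  exact this

lemma T_lt {h : ℝ} (hh : 0 < h) {a b : ℕ} (ha : 0 < a) (hab : a < b) :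
    T h b < T h a := by
  have ha' : (0:ℝ) < a := by exact_mod_cast ha
  have hb' : (0:ℝ) < b := by exact_mod_cast ha.trans hab
  have h1 : (0:ℝ) < a * h := by positivity
  have h2 : (a:ℝ) * h < b * h := by
    apply mul_lt_mul_of_pos_right _ hh; exact_mod_cast hab
  have hlt := tanh_div_strictAnti h1 h2
  have e1 : Real.tanh ((a:ℝ) * h) / a = Real.tanh ((a:ℝ) * h) / ((a:ℝ) * h) * h := by
    field_simp
  have e2 : Real.tanh ((b:ℝ) * h) / b = Real.tanh ((b:ℝ) * h) / ((b:ℝ) * h) * h := by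
    field_simp
  unfold T
  rw [e1, e2]
  exact mul_lt_mul_of_pos_right hlt hh

lemma T_pos {h : ℝ} (hh : 0 < h) {a : ℕ} (ha : 0 < a) : 0 < T h a := by
  have ha' : (0:ℝ) < a := by exact_mod_cast ha
  have h1 : (0:ℝ) < a * h := by positivity
  have ht : 0 < Real.tanh ((a:ℝ) * h) := by
    rw [Real.tanh_eq_sinh_div_cosh]
    exact div_pos (Real.sinh_pos_iff.mpr h1) (Real.cosh_pos _)
  exact div_pos ht ha'

/-- If `n ≠ m` are positive integers and `γ² = γ*_{n,m}`, then the same-sign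
bifurcation values for the modes `n` and `m` coincide:
`λ*_{n,+}(γ) = λ*_{m,+}(γ)` or `λ*_{n,−}(γ) = λ*_{m,−}(γ)`. -/
theorem same_sign_coincide (h g E22 : ℝ) (hh : 0 < h) (hg : 0 < g)
    (hE : 0 < E22) (n m : ℕ) (hn : 0 < n) (hm : 0 < m) (hnm : n ≠ m)
    (γ : ℝ) (hγ : γ ^ 2 = gammaStar h g E22 n m) :
    lamPlus h g E22 γ n = lamPlus h g E22 γ m ∨
    lamMinus h g E22 γ n = lamMinus h g E22 γ m := by
  have hTn : 0 < T h n := T_pos hh hn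
  have hTm : 0 < T h m := T_pos hh hm
  have hTne : T h n ≠ T h m := by
    rcases lt_or_gt_of_ne hnm with h' | h'
    · exact (T_lt hh hn h').ne'
    · exact (T_lt hh hm h').ne
  have h4 : ((m:ℝ) ^ 4 - (n:ℝ) ^ 4) ≠ 0 := by
    rcases lt_or_gt_of_ne hnm with h' | h'
    · have : (n:ℝ) < m := by exact_mod_cast h'
      have := pow_lt_pow_left₀ this (by positivity) (n := 4) (by norm_num)
      intro hc; nlinarith
    · have : (m:ℝ) < n := by exact_mod_cast h'
      have := pow_lt_pow_left₀ this (by positivity) (n := 4) (by norm_num)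
      intro hc; nlinarith
  have hD : 2 * T h n * T h m * (T h n - T h m) * ((m : ℝ) ^ 4 - (n : ℝ) ^ 4) * E22 ≠ 0 :=
    mul_ne_zero (mul_ne_zero (mul_ne_zero (mul_ne_zero
      (mul_ne_zero two_ne_zero hTn.ne') hTm.ne') (sub_ne_zero.mpr hTne)) h4) hE.ne'
  rw [gammaStar, eq_div_iff hD] at hγ
  have hAn0 : 0 ≤ γ ^ 2 * (T h n) ^ 2 / 4 + (g + (n:ℝ) ^ 4 * E22 / 2) * T h n := by positivity
  have hAm0 : 0 ≤ γ ^ 2 * (T h m) ^ 2 / 4 + (g + (m:ℝ) ^ 4 * E22 / 2) * T h m := by positivity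
  set Sn := Real.sqrt (γ ^ 2 * (T h n) ^ 2 / 4 + (g + (n:ℝ) ^ 4 * E22 / 2) * T h n) with hSn
  set Sm := Real.sqrt (γ ^ 2 * (T h m) ^ 2 / 4 + (g + (m:ℝ) ^ 4 * E22 / 2) * T h m) with hSm
  have hSn0 : 0 ≤ Sn := Real.sqrt_nonneg _
  have hSm0 : 0 ≤ Sm := Real.sqrt_nonneg _
  have hSn2 : Sn ^ 2 = γ ^ 2 * (T h n) ^ 2 / 4 + (g + (n:ℝ) ^ 4 * E22 / 2) * T h n :=
    Real.sq_sqrt hAn0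
  have hSm2 : Sm ^ 2 = γ ^ 2 * (T h m) ^ 2 / 4 + (g + (m:ℝ) ^ 4 * E22 / 2) * T h m :=
    Real.sq_sqrt hAm0
  have hRpos : 0 < γ ^ 2 * T h n * T h m / 2 + (g + (n:ℝ) ^ 4 * E22 / 2) * T h n
      + (g + (m:ℝ) ^ 4 * E22 / 2) * T h m := by positivity
  have key1 : 2 * Sn * Sm = γ ^ 2 * T h n * T h m / 2
      + (g + (n:ℝ) ^ 4 * E22 / 2) * T h n + (g + (m:ℝ) ^ 4 * E22 / 2) * T h m := by
    have hsq : (2 * Sn * Sm) ^ 2 = (γ ^ 2 * T h n * T h m / 2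
        + (g + (n:ℝ) ^ 4 * E22 / 2) * T h n + (g + (m:ℝ) ^ 4 * E22 / 2) * T h m) ^ 2 := by
      linear_combination (4 * Sm ^ 2) * hSn2
        + (4 * (γ ^ 2 * (T h n) ^ 2 / 4 + (g + (n:ℝ) ^ 4 * E22 / 2) * T h n)) * hSm2
        + (1/4) * hγ
    rcases sq_eq_sq_iff_eq_or_eq_neg.mp hsq with he | he
    · exact he
    · have h0 : 0 ≤ 2 * Sn * Sm := by positivity
      linarith
  have key2 : (Sn - Sm) ^ 2 = (γ / 2 * (T h n - T h m)) ^ 2 := by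
    linear_combination hSn2 + hSm2 - key1
  rcases sq_eq_sq_iff_eq_or_eq_neg.mp key2 with he | he
  · right
    simp only [lamMinus, ← hSn, ← hSm]
    linarith
  · left
    simp only [lamPlus, ← hSn, ← hSm]
    linarith
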